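/- arXiv:2103.13979 — 2 statements merged into one kernel-verified Lean document; each statement's English description precedes it below -/
import Mathlib

section
/- Let n ≥ 3, ε > 0, and define u(r) = sqrt((r - 1 + ε) r^{1-n}) for r > 1. Then u satisfies the radial Schrödinger equation -u''(r) - ((n-1)/r) u'(r) - ((n-1)(n-3)/(4 r²)) u(r) - u(r)/(4(r - 1 + ε)²) = 0 for all r > 1. -/
set_option maxHeartbeats 1000000

open Real Filter Set

/-- `u(r) = sqrt((r - 1 + ε) r^{1-n})`. -/
noncomputable def uRad (n : ℕ) (ε : ℝ) : ℝ → ℝ := fun r =>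
  Real.sqrt ((r - 1 + ε) * r ^ ((1 : ℝ) - n))

theorem stmt11 (n : ℕ) (hn : 3 ≤ n) (ε : ℝ) (hε : 0 < ε) :
    ∀ r : ℝ, 1 < r →
      -(deriv (deriv (uRad n ε)) r) - (((n : ℝ) - 1) / r) * deriv (uRad n ε) r
        - (((n : ℝ) - 1) * ((n : ℝ) - 3) / (4 * r ^ 2)) * uRad n ε r
        - uRad n ε r / (4 * (r - 1 + ε) ^ 2) = 0 := by
  intro r hr
  set a : ℝ := (1 : ℝ) - n with ha
  have hr0 : (0:ℝ) < r := lt_trans one_pos hr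
  -- derivative of F x = (x-1+ε) * x^a
  have hF : ∀ x : ℝ, 0 < x → HasDerivAt (fun x : ℝ => (x - 1 + ε) * x ^ a)
      (x ^ a + (x - 1 + ε) * (a * x ^ (a - 1))) x := by
    intro x hx
    have h1 : HasDerivAt (fun x : ℝ => x - 1 + ε) 1 x := by
      simpa using ((hasDerivAt_id x).sub_const 1).add_const ε
    have h2 : HasDerivAt (fun x : ℝ => x ^ a) (a * x ^ (a-1)) x :=
      Real.hasDerivAt_rpow_const (Or.inl hx.ne')
    have h := h1.mul h2; simp only [one_mul] at h; exact h
  have hFpos : ∀ x : ℝ, 1 < x → 0 < (x - 1 + ε) * x ^ a := by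
    intro x hx
    have h1 : 0 < x - 1 + ε := by nlinarith
    exact mul_pos h1 (Real.rpow_pos_of_pos (lt_trans one_pos hx) a)
  -- first derivative of u
  have hu : ∀ x : ℝ, 1 < x → HasDerivAt (uRad n ε)
      ((x ^ a + (x - 1 + ε) * (a * x ^ (a-1))) / (2 * Real.sqrt ((x - 1 + ε) * x ^ a))) x := by
    intro x hx
    exact (hF x (lt_trans one_pos hx)).sqrt (hFpos x hx).ne'
  have hderiv1 : ∀ x : ℝ, 1 < x → deriv (uRad n ε) x
      = (x ^ a + (x - 1 + ε) * (a * x ^ (a-1))) / (2 * Real.sqrt ((x - 1 + ε) * x ^ a)) :=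
    fun x hx => (hu x hx).deriv
  -- second derivative
  have hsq : 0 < Real.sqrt ((r - 1 + ε) * r ^ a) := Real.sqrt_pos.mpr (hFpos r hr)
  have hG : HasDerivAt (fun x : ℝ =>
      (x ^ a + (x - 1 + ε) * (a * x ^ (a-1))) / (2 * Real.sqrt ((x - 1 + ε) * x ^ a)))
      (((a * r ^ (a-1) + (1 * (a * r ^ (a-1)) + (r - 1 + ε) * (a * ((a-1) * r ^ (a-2)))))
          * (2 * Real.sqrt ((r - 1 + ε) * r ^ a))
        - (r ^ a + (r - 1 + ε) * (a * r ^ (a-1)))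
          * (2 * ((r ^ a + (r - 1 + ε) * (a * r ^ (a-1)))
              / (2 * Real.sqrt ((r - 1 + ε) * r ^ a)))))
        / (2 * Real.sqrt ((r - 1 + ε) * r ^ a)) ^ 2) r := by
    have hN : HasDerivAt (fun x : ℝ => x ^ a + (x - 1 + ε) * (a * x ^ (a-1)))
        (a * r ^ (a-1) + (1 * (a * r ^ (a-1)) + (r - 1 + ε) * (a * ((a-1) * r ^ (a-2))))) r := by
      have h1 : HasDerivAt (fun x : ℝ => x ^ a) (a * r ^ (a-1)) r :=
        Real.hasDerivAt_rpow_const (Or.inl hr0.ne')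
      have h2 : HasDerivAt (fun x : ℝ => x - 1 + ε) 1 r := by
        simpa using ((hasDerivAt_id r).sub_const 1).add_const ε
      have h3 : HasDerivAt (fun x : ℝ => a * x ^ (a-1)) (a * ((a-1) * r ^ (a-2))) r := by
        have h4 := (Real.hasDerivAt_rpow_const (p := a-1) (Or.inl hr0.ne')).const_mul a
        simpa [show a - 1 - 1 = a - 2 by ring] using h4
      exact h1.add (h2.mul h3)
    have hD : HasDerivAt (fun x : ℝ => 2 * Real.sqrt ((x - 1 + ε) * x ^ a))
        (2 * ((r ^ a + (r - 1 + ε) * (a * r ^ (a-1)))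
            / (2 * Real.sqrt ((r - 1 + ε) * r ^ a)))) r :=
      ((hF r hr0).sqrt (hFpos r hr).ne').const_mul 2
    exact hN.div hD (by positivity)
  have hderiv2 : deriv (deriv (uRad n ε)) r
      = ((a * r ^ (a-1) + (1 * (a * r ^ (a-1)) + (r - 1 + ε) * (a * ((a-1) * r ^ (a-2)))))
          * (2 * Real.sqrt ((r - 1 + ε) * r ^ a))
        - (r ^ a + (r - 1 + ε) * (a * r ^ (a-1)))
          * (2 * ((r ^ a + (r - 1 + ε) * (a * r ^ (a-1)))
              / (2 * Real.sqrt ((r - 1 + ε) * r ^ a)))))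
        / (2 * Real.sqrt ((r - 1 + ε) * r ^ a)) ^ 2 := by
    have heq : deriv (uRad n ε) =ᶠ[nhds r] (fun x : ℝ =>
        (x ^ a + (x - 1 + ε) * (a * x ^ (a-1))) / (2 * Real.sqrt ((x - 1 + ε) * x ^ a))) :=
      Filter.eventuallyEq_of_mem (Ioi_mem_nhds hr) (fun x hx => hderiv1 x hx)
    rw [heq.deriv_eq]
    exact hG.deriv
  -- rewrite everything
  rw [hderiv2, hderiv1 r hr]
  show -(_) - _ - _ * Real.sqrt ((r - 1 + ε) * r ^ a) - Real.sqrt ((r - 1 + ε) * r ^ a) / _ = 0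
  have hA : r ^ a = r ^ 2 * r ^ (a-2) := by
    rw [show a = 2 + (a-2) by ring, Real.rpow_add hr0]
    norm_num [Real.rpow_natCast]
  have hA1 : r ^ (a-1) = r * r ^ (a-2) := by
    rw [show a - 1 = 1 + (a-2) by ring, Real.rpow_add hr0, Real.rpow_one]
  rw [hA, hA1]
  set t : ℝ := r ^ (a-2) with ht
  have htpos : 0 < t := Real.rpow_pos_of_pos hr0 _
  have hq : 0 < r - 1 + ε := by nlinarith
  set s : ℝ := Real.sqrt ((r - 1 + ε) * (r ^ 2 * t)) with hs
  have hspos : 0 < s := by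
    rw [hs]; exact Real.sqrt_pos.mpr (by positivity)
  have hs2 : s ^ 2 = (r - 1 + ε) * (r ^ 2 * t) := Real.sq_sqrt (by positivity)
  have han : a = 1 - n := ha
  have hn' : (n : ℝ) = 1 - a := by rw [han]; ring
  rw [hn']
  have h3 : s^3 = ((r - 1 + ε) * (r ^ 2 * t)) * s := by rw [← hs2]; ring
  have h5 : s^5 = ((r - 1 + ε) * (r ^ 2 * t))^2 * s := by
    rw [← hs2]; ring
  have h4 : s^4 = ((r - 1 + ε) * (r ^ 2 * t))^2 := by rw [← hs2]; ring
  field_simp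
  ring_nf
  simp only [h3, h4, h5, hs2]
  ring
end

section
/- Let n ≥ 3, γ ≥ 0, ε_γ = 1/(n - 1 + 2γ), v(r) = sqrt((r - 1 + ε_γ) r^{1-n}) and w(r) = v(r) · log(r - 1 + ε_γ) for r > 1. Then w also satisfies -w'' - ((n-1)/r) w' - ((n-1)(n-3)/(4r²)) w - w/(4(r-1+ε_γ)²) = 0 on (1, ∞), and v(r)/w(r) → 0 as r → ∞. -/
noncomputable def vRad (n : ℕ) (ε : ℝ) : ℝ → ℝ := fun r =>
  Real.sqrt ((r - 1 + ε) * r ^ ((1 : ℝ) - n))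

noncomputable def wRad (n : ℕ) (ε : ℝ) : ℝ → ℝ := fun r =>
  vRad n ε r * Real.log (r - 1 + ε)

noncomputable def pF (n : ℕ) : ℝ → ℝ := fun x => x ^ ((1 : ℝ) - n)

noncomputable def qF (n : ℕ) (ε : ℝ) : ℝ → ℝ := fun x =>
  Real.sqrt ((x - 1 + ε) * pF n x)

noncomputable def fD (n : ℕ) (ε : ℝ) : ℝ → ℝ := fun x =>
  pF n x + (x - 1 + ε) * (((1:ℝ) - n) * pF n x / x)

noncomputable def w1 (n : ℕ) (ε : ℝ) : ℝ → ℝ := fun x =>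
  fD n ε x / (2 * qF n ε x) * Real.log (x - 1 + ε) + qF n ε x / (x - 1 + ε)

lemma hasDerivAt_pF (n : ℕ) {x : ℝ} (hx : 0 < x) :
    HasDerivAt (pF n) (((1:ℝ) - n) * pF n x / x) x := by
  have h := Real.hasDerivAt_rpow_const (p := (1:ℝ) - n) (Or.inl hx.ne')
  have hx1 : x ^ ((1:ℝ) - n - 1) = pF n x / x := by
    rw [pF, Real.rpow_sub hx, Real.rpow_one]
  rw [hx1, ← mul_div_assoc] at h
  exact h

lemma hasDerivAt_sE (ε : ℝ) (x : ℝ) : HasDerivAt (fun y : ℝ => y - 1 + ε) 1 x := by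
  simpa using ((hasDerivAt_id x).sub_const 1).add_const ε

lemma hasDerivAt_f (n : ℕ) (ε : ℝ) {x : ℝ} (hx : 0 < x) :
    HasDerivAt (fun y => (y - 1 + ε) * pF n y) (fD n ε x) x := by
  have h := (hasDerivAt_sE ε x).mul (hasDerivAt_pF n hx)
  refine h.congr_deriv ?_
  rw [fD]; ring

lemma qF_pos (n : ℕ) {ε x : ℝ} (hε : 0 < ε) (hx : 1 < x) : 0 < qF n ε x := by
  have hx0 : (0:ℝ) < x := lt_trans one_pos hx
  have hs : 0 < x - 1 + ε := by linarith
  exact Real.sqrt_pos.2 (mul_pos hs (Real.rpow_pos_of_pos hx0 _))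

lemma hasDerivAt_qF (n : ℕ) {ε x : ℝ} (hε : 0 < ε) (hx : 1 < x) :
    HasDerivAt (qF n ε) (fD n ε x / (2 * qF n ε x)) x := by
  have hx0 : (0:ℝ) < x := lt_trans one_pos hx
  have hs : 0 < x - 1 + ε := by linarith
  have hf : 0 < (x - 1 + ε) * pF n x := mul_pos hs (Real.rpow_pos_of_pos hx0 _)
  exact (hasDerivAt_f n ε hx0).sqrt hf.ne'

lemma hasDerivAt_wRad (n : ℕ) {ε x : ℝ} (hε : 0 < ε) (hx : 1 < x) :
    HasDerivAt (wRad n ε) (w1 n ε x) x := by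
  have hs : 0 < x - 1 + ε := by linarith
  have hL : HasDerivAt (fun y : ℝ => Real.log (y - 1 + ε)) (1 / (x - 1 + ε)) x :=
    (hasDerivAt_sE ε x).log hs.ne'
  have h := (hasDerivAt_qF n hε hx).mul hL
  refine h.congr_deriv ?_
  rw [w1]; ring

lemma hasDerivAt_w1' (n : ℕ) {ε x : ℝ} (hε : 0 < ε) (hx : 1 < x) :
    HasDerivAt (w1 n ε)
      (((((1:ℝ) - n) * pF n x / x +
          (1 * (((1:ℝ) - n) * pF n x / x) +
            (x - 1 + ε) *
              ((((1:ℝ) - n) * (((1:ℝ) - n) * pF n x / x) * x - ((1:ℝ) - n) * pF n x * 1) / x ^ 2))) *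
            (2 * qF n ε x) -
          fD n ε x * (2 * (fD n ε x / (2 * qF n ε x)))) / (2 * qF n ε x) ^ 2 *
          Real.log (x - 1 + ε) +
        fD n ε x / (2 * qF n ε x) * (1 / (x - 1 + ε)) +
        (fD n ε x / (2 * qF n ε x) * (x - 1 + ε) - qF n ε x * 1) / (x - 1 + ε) ^ 2) x := by
  have hx0 : (0:ℝ) < x := lt_trans one_pos hx
  have hs : 0 < x - 1 + ε := by linarith
  have hq := hasDerivAt_qF n hε hx
  have hqpos := qF_pos n hε hx
  have hb : HasDerivAt (fun y => ((1:ℝ) - n) * pF n y / y)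
      ((((1:ℝ) - n) * (((1:ℝ) - n) * pF n x / x) * x - ((1:ℝ) - n) * pF n x * 1) / x ^ 2) x :=
    ((hasDerivAt_pF n hx0).const_mul ((1:ℝ) - n)).div (hasDerivAt_id x) hx0.ne'
  have hu : HasDerivAt (fD n ε)
      (((1:ℝ) - n) * pF n x / x +
        (1 * (((1:ℝ) - n) * pF n x / x) +
          (x - 1 + ε) *
            ((((1:ℝ) - n) * (((1:ℝ) - n) * pF n x / x) * x - ((1:ℝ) - n) * pF n x * 1) / x ^ 2))) x :=
    (hasDerivAt_pF n hx0).add ((hasDerivAt_sE ε x).mul hb)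
  have h2q : (2 : ℝ) * qF n ε x ≠ 0 := by positivity
  have hA := hu.div (hq.const_mul 2) h2q
  have hL : HasDerivAt (fun y : ℝ => Real.log (y - 1 + ε)) (1 / (x - 1 + ε)) x :=
    (hasDerivAt_sE ε x).log hs.ne'
  have hAL := hA.mul hL
  have hQS := hq.div (hasDerivAt_sE ε x) hs.ne'
  exact hAL.add hQS

theorem stmt13 (n : ℕ) (hn : 3 ≤ n) (γ : ℝ) (hγ : 0 ≤ γ) :
    (∀ r : ℝ, 1 < r →
      -(deriv (deriv (wRad n ((n : ℝ) - 1 + 2 * γ)⁻¹)) r)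
        - (((n : ℝ) - 1) / r) * deriv (wRad n ((n : ℝ) - 1 + 2 * γ)⁻¹) r
        - (((n : ℝ) - 1) * ((n : ℝ) - 3) / (4 * r ^ 2)) * wRad n ((n : ℝ) - 1 + 2 * γ)⁻¹ r
        - wRad n ((n : ℝ) - 1 + 2 * γ)⁻¹ r / (4 * (r - 1 + ((n : ℝ) - 1 + 2 * γ)⁻¹) ^ 2) = 0) ∧
    Filter.Tendsto
      (fun r : ℝ => vRad n ((n : ℝ) - 1 + 2 * γ)⁻¹ r / wRad n ((n : ℝ) - 1 + 2 * γ)⁻¹ r)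
      Filter.atTop (nhds 0) := by
  have hn3 : (3:ℝ) ≤ (n:ℝ) := by exact_mod_cast hn
  set ε : ℝ := ((n : ℝ) - 1 + 2 * γ)⁻¹ with hεdef
  have hε : 0 < ε := by
    apply inv_pos.2; linarith
  constructor
  · intro r hr
    have hr0 : (0:ℝ) < r := lt_trans one_pos hr
    have hs : 0 < r - 1 + ε := by linarith
    have hd1 : deriv (wRad n ε) =ᶠ[nhds r] w1 n ε := by
      filter_upwards [eventually_gt_nhds hr] with x hx using (hasDerivAt_wRad n hε hx).deriv
    rw [hd1.deriv_eq, (hasDerivAt_wRad n hε hr).deriv, (hasDerivAt_w1' n hε hr).deriv]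
    have hw : wRad n ε r = qF n ε r * Real.log (r - 1 + ε) := rfl
    rw [hw, w1, fD]
    have hqpos := qF_pos n hε hr
    have hq2 : qF n ε r ^ 2 = (r - 1 + ε) * pF n r :=
      Real.sq_sqrt (mul_pos hs (Real.rpow_pos_of_pos hr0 _)).le
    have hP : pF n r = qF n ε r ^ 2 / (r - 1 + ε) := by
      rw [hq2]; field_simp
    rw [hP]
    field_simp
    ring
  · have hlog : Filter.Tendsto (fun r : ℝ => Real.log (r - 1 + ε)) Filter.atTop Filter.atTop := by
      apply Real.tendsto_log_atTop.comp
      apply Filter.tendsto_atTop_add_const_right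
      exact Filter.tendsto_atTop_add_const_right _ _ Filter.tendsto_id
    have h0 : Filter.Tendsto (fun r : ℝ => (Real.log (r - 1 + ε))⁻¹) Filter.atTop (nhds 0) :=
      hlog.inv_tendsto_atTop
    apply h0.congr'
    filter_upwards [Filter.eventually_gt_atTop (1:ℝ)] with r hr
    have hr0 : (0:ℝ) < r := lt_trans one_pos hr
    have hs : 0 < r - 1 + ε := by linarith
    have hv : 0 < vRad n ε r :=
      Real.sqrt_pos.2 (mul_pos hs (Real.rpow_pos_of_pos hr0 _))
    show (Real.log (r - 1 + ε))⁻¹ = vRad n ε r / wRad n ε r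
    rw [wRad]
    rw [← div_div, div_self hv.ne', one_div]
end
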